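/- Let ρ̄_k be the exact quantum trajectory with parameter p̂ = a and let (ρ^a_k, ρ^b_k, π^a_k, π^b_k) be the two-particle quantum filter. Then the process π^a_k · F(ρ̄_k, ρ^a_k) is a submartingale with respect to the filtration generated by the measurement outcomes, i.e. E[π^a_k F(ρ̄_k, ρ^a_k) | ρ̄_{k-1}, ρ^a_{k-1}, ρ^b_{k-1}, π^a_{k-1}, π^b_{k-1}] ≥ π^a_{k-1} F(ρ̄_{k-1}, ρ^a_{k-1}). -/

import Mathlib

open Matrix
open scoped ComplexOrder Classical

set_option linter.unusedSectionVars false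
set_option linter.unusedVariables false
set_option maxHeartbeats 1600000

/-- Matrix square root of a positive semidefinite matrix (junk value `0` otherwise). -/
noncomputable def matSqrt {ι : Type*} [Fintype ι] [DecidableEq ι]
    (A : Matrix ι ι ℂ) : Matrix ι ι ℂ :=
  if h : A.PosSemidef then
    (h.1.eigenvectorUnitary : Matrix ι ι ℂ) * diagonal ((↑) ∘ (√·) ∘ h.1.eigenvalues) *
      (star h.1.eigenvectorUnitary : Matrix ι ι ℂ) else 0

/-- Fidelity `F(A,B) = (tr √(√A B √A))²` (square of the usual fidelity). -/
noncomputable def fidelity {ι : Type*} [Fintype ι] [DecidableEq ι]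
    (A B : Matrix ι ι ℂ) : ℝ :=
  ((matSqrt (matSqrt A * B * matSqrt A)).trace.re) ^ 2

/-- Partial Kraus map `ρ ↦ ∑_μ M_μ ρ M_μᴴ`. -/
noncomputable def kraus {n s : ℕ} (M : Fin s → Matrix (Fin n) (Fin n) ℂ)
    (ρ : Matrix (Fin n) (Fin n) ℂ) : Matrix (Fin n) (Fin n) ℂ :=
  ∑ μ, M μ * ρ * (M μ)ᴴ

section base
variable {ι : Type*} [Fintype ι] [DecidableEq ι]
open scoped MatrixOrder in
lemma matSqrt_of_psd {A : Matrix ι ι ℂ} (h : A.PosSemidef) : matSqrt A = CFC.sqrt A := by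
  rw [matSqrt, dif_pos h, CFC.sqrt_eq_cfc, cfc_nnreal_eq_real _ A h.nonneg, h.1.cfc_eq,
    IsHermitian.cfc, Unitary.conjStarAlgAut_apply]
  congr 3
  funext i
  simp only [Function.comp_apply]
  generalize h.1.eigenvalues i = x
  rcases le_total x 0 with hx | hx <;> simp [hx, Real.sqrt_eq_zero']

open scoped MatrixOrder in
lemma matSqrt_posSemidef {A : Matrix ι ι ℂ} (h : A.PosSemidef) : (matSqrt A).PosSemidef := by
  rw [matSqrt_of_psd h]; exact (CFC.sqrt_nonneg A).posSemidef

open scoped MatrixOrder in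
lemma matSqrt_mul_self {A : Matrix ι ι ℂ} (h : A.PosSemidef) : matSqrt A * matSqrt A = A := by
  rw [matSqrt_of_psd h]; exact CFC.sqrt_mul_sqrt_self A h.nonneg

lemma matSqrt_herm {A : Matrix ι ι ℂ} (h : A.PosSemidef) : (matSqrt A)ᴴ = matSqrt A :=
  (matSqrt_posSemidef h).1

open scoped MatrixOrder in
lemma matSqrt_unique {A B : Matrix ι ι ℂ} (hB : B.PosSemidef) (hBB : B * B = A) :
    matSqrt A = B := by
  have hA : A.PosSemidef := by rw [← hBB, ← pow_two]; exact hB.pow 2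
  rw [matSqrt_of_psd hA]
  exact CFC.sqrt_unique hBB hB.nonneg

lemma matSqrt_zero : matSqrt (0 : Matrix ι ι ℂ) = 0 :=
  matSqrt_unique Matrix.PosSemidef.zero (by simp)

lemma psd_diag_nonneg {A : Matrix ι ι ℂ} (h : A.PosSemidef) (i : ι) : 0 ≤ A i i := by
  have := h.dotProduct_mulVec_nonneg (Pi.single i 1)
  have e : star (Pi.single i 1 : ι → ℂ) ⬝ᵥ (A *ᵥ Pi.single i 1) = A i i := by
    simp [Matrix.mulVec_single, dotProduct, Pi.single_apply, apply_ite (star : ℂ → ℂ)]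
  rwa [e] at this

lemma psd_trace_re_nonneg {A : Matrix ι ι ℂ} (h : A.PosSemidef) : 0 ≤ A.trace.re := by
  rw [Matrix.trace]
  simp only [Complex.re_sum]
  exact Finset.sum_nonneg fun i _ => (Complex.le_def.mp (psd_diag_nonneg h i)).1

lemma psd_trace_im {A : Matrix ι ι ℂ} (h : A.PosSemidef) : A.trace.im = 0 := by
  rw [Matrix.trace]
  simp only [Complex.im_sum]
  refine Finset.sum_eq_zero fun i _ => ?_
  have := (Complex.le_def.mp (psd_diag_nonneg h i)).2
  simpa using this.symm

lemma psd_trace_eq_re {A : Matrix ι ι ℂ} (h : A.PosSemidef) : A.trace = (A.trace.re : ℂ) :=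
  Complex.ext rfl (by simpa using psd_trace_im h)



lemma trace_conjTranspose_mul (A B : Matrix ι ι ℂ) :
    (Aᴴ * B).trace = ∑ j, ∑ i, (starRingEnd ℂ) (A i j) * B i j := by
  rw [Matrix.trace]
  refine Finset.sum_congr rfl fun j _ => ?_
  simp [Matrix.mul_apply, Matrix.diag, Matrix.conjTranspose_apply]

lemma trace_conjTranspose_mul_self_re (A : Matrix ι ι ℂ) :
    (Aᴴ * A).trace.re = ∑ j, ∑ i, ‖A i j‖ ^ 2 := by
  rw [trace_conjTranspose_mul]
  simp only [Complex.re_sum]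
  refine Finset.sum_congr rfl fun j _ => ?_
  refine Finset.sum_congr rfl fun i _ => ?_
  rw [Complex.conj_mul']
  norm_cast

lemma trace_conjTranspose_mul_self_nonneg (A : Matrix ι ι ℂ) :
    0 ≤ (Aᴴ * A).trace.re := by
  rw [trace_conjTranspose_mul_self_re]
  positivity

/-- Real Cauchy–Schwarz, sqrt form. -/
lemma sum_le_sqrt_mul_sqrt {α : Type*} (s : Finset α) (f g : α → ℝ)
    (hf : ∀ i ∈ s, 0 ≤ f i) (hg : ∀ i ∈ s, 0 ≤ g i) :
    ∑ i ∈ s, f i * g i ≤ Real.sqrt (∑ i ∈ s, f i ^ 2) * Real.sqrt (∑ i ∈ s, g i ^ 2) := by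
  have h := Finset.sum_mul_sq_le_sq_mul_sq s f g
  have h0 : 0 ≤ ∑ i ∈ s, f i * g i :=
    Finset.sum_nonneg fun i hi => mul_nonneg (hf i hi) (hg i hi)
  calc ∑ i ∈ s, f i * g i = Real.sqrt ((∑ i ∈ s, f i * g i) ^ 2) := by
        rw [Real.sqrt_sq h0]
    _ ≤ Real.sqrt ((∑ i ∈ s, f i ^ 2) * ∑ i ∈ s, g i ^ 2) := Real.sqrt_le_sqrt h
    _ = _ := Real.sqrt_mul (Finset.sum_nonneg fun i _ => sq_nonneg _) _

/-- Frobenius Cauchy–Schwarz for the real part of the trace inner product. -/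
lemma trace_cs (A B : Matrix ι ι ℂ) :
    (Aᴴ * B).trace.re ≤
      Real.sqrt ((Aᴴ * A).trace.re) * Real.sqrt ((Bᴴ * B).trace.re) := by
  rw [trace_conjTranspose_mul, trace_conjTranspose_mul_self_re, trace_conjTranspose_mul_self_re]
  simp only [Complex.re_sum]
  calc ∑ j, ∑ i, ((starRingEnd ℂ) (A i j) * B i j).re
      ≤ ∑ j, ∑ i, ‖A i j‖ * ‖B i j‖ := by
        refine Finset.sum_le_sum fun j _ => Finset.sum_le_sum fun i _ => ?_
        calc ((starRingEnd ℂ) (A i j) * B i j).re ≤ ‖(starRingEnd ℂ) (A i j) * B i j‖ :=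
              Complex.re_le_norm _
          _ = ‖A i j‖ * ‖B i j‖ := by
              rw [norm_mul, Complex.norm_conj]
    _ ≤ _ := by
        have := sum_le_sqrt_mul_sqrt (s := (Finset.univ : Finset (ι × ι)))
          (f := fun p => ‖A p.2 p.1‖) (g := fun p => ‖B p.2 p.1‖)
          (fun i _ => norm_nonneg _) (fun i _ => norm_nonneg _)
        simp only [← Finset.univ_product_univ, Finset.sum_product] at this
        exact this



noncomputable def pinv {A : Matrix ι ι ℂ} (hA : A.IsHermitian) : Matrix ι ι ℂ :=
  (hA.eigenvectorUnitary : Matrix ι ι ℂ) *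
    diagonal (fun i => (((hA.eigenvalues i)⁻¹ : ℝ) : ℂ)) *
    star (hA.eigenvectorUnitary : Matrix ι ι ℂ)

section pinv
variable {A : Matrix ι ι ℂ} (hA : A.IsHermitian)

private lemma U_mul_star : (hA.eigenvectorUnitary : Matrix ι ι ℂ) *
    star (hA.eigenvectorUnitary : Matrix ι ι ℂ) = 1 :=
  (Matrix.mem_unitaryGroup_iff).mp (hA.eigenvectorUnitary).2

private lemma star_mul_U : star (hA.eigenvectorUnitary : Matrix ι ι ℂ) *
    (hA.eigenvectorUnitary : Matrix ι ι ℂ) = 1 :=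
  (Matrix.mem_unitaryGroup_iff').mp (hA.eigenvectorUnitary).2

lemma conj_diag_mul (d e : ι → ℂ) :
    ((hA.eigenvectorUnitary : Matrix ι ι ℂ) * diagonal d * star (hA.eigenvectorUnitary : Matrix ι ι ℂ)) *
    ((hA.eigenvectorUnitary : Matrix ι ι ℂ) * diagonal e * star (hA.eigenvectorUnitary : Matrix ι ι ℂ)) =
    (hA.eigenvectorUnitary : Matrix ι ι ℂ) * diagonal (fun i => d i * e i) *
      star (hA.eigenvectorUnitary : Matrix ι ι ℂ) := by
  set U := (hA.eigenvectorUnitary : Matrix ι ι ℂ)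
  calc (U * diagonal d * star U) * (U * diagonal e * star U)
      = U * diagonal d * (star U * U) * diagonal e * star U := by
        simp only [Matrix.mul_assoc]
    _ = U * (diagonal d * diagonal e) * star U := by
        rw [star_mul_U hA]; simp only [Matrix.mul_assoc, Matrix.mul_one, Matrix.one_mul]
    _ = _ := by rw [Matrix.diagonal_mul_diagonal]

lemma conj_diag_psd (d : ι → ℝ) (hd : ∀ i, 0 ≤ d i) :
    (((hA.eigenvectorUnitary : Matrix ι ι ℂ) * diagonal (fun i => ((d i : ℝ) : ℂ)) *
      star (hA.eigenvectorUnitary : Matrix ι ι ℂ))).PosSemidef := by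
  have h1 : (diagonal (fun i => ((d i : ℝ) : ℂ))).PosSemidef :=
    Matrix.posSemidef_diagonal_iff.mpr fun i => by
      rw [Complex.zero_le_real]; exact hd i
  have := h1.mul_mul_conjTranspose_same (hA.eigenvectorUnitary : Matrix ι ι ℂ)
  simpa [Matrix.star_eq_conjTranspose, Matrix.mul_assoc] using this

lemma conj_diag_herm (d : ι → ℝ) :
    (((hA.eigenvectorUnitary : Matrix ι ι ℂ) * diagonal (fun i => ((d i : ℝ) : ℂ)) *
      star (hA.eigenvectorUnitary : Matrix ι ι ℂ)))ᴴ =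
    ((hA.eigenvectorUnitary : Matrix ι ι ℂ) * diagonal (fun i => ((d i : ℝ) : ℂ)) *
      star (hA.eigenvectorUnitary : Matrix ι ι ℂ)) := by
  set U := (hA.eigenvectorUnitary : Matrix ι ι ℂ)
  have hd : (diagonal (fun i => ((d i : ℝ) : ℂ)))ᴴ = diagonal (fun i => ((d i : ℝ) : ℂ)) := by
    rw [Matrix.diagonal_conjTranspose]
    refine congrArg diagonal (funext fun i => ?_)
    simp only [Pi.star_apply, Complex.star_def]
    exact Complex.conj_ofReal _
  simp only [Matrix.conjTranspose_mul, hd, Matrix.mul_assoc]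
  rw [Matrix.star_eq_conjTranspose, Matrix.conjTranspose_conjTranspose]

lemma spectral : A =
    (hA.eigenvectorUnitary : Matrix ι ι ℂ) * diagonal (fun i => ((hA.eigenvalues i : ℝ) : ℂ)) *
      star (hA.eigenvectorUnitary : Matrix ι ι ℂ) :=
  by conv_lhs => rw [hA.spectral_theorem]
     rw [Unitary.conjStarAlgAut_apply] <;> rfl

end pinv

section pinvPSD
variable {R : Matrix ι ι ℂ} (hR : R.PosSemidef)

/-- abbreviation for conjugated diagonal forms w.r.t. the eigenbasis of `R`. -/
private noncomputable def cdg (hR : R.PosSemidef) (f : ι → ℂ) : Matrix ι ι ℂ :=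
  (hR.1.eigenvectorUnitary : Matrix ι ι ℂ) * diagonal f * star (hR.1.eigenvectorUnitary : Matrix ι ι ℂ)

private lemma cdg_mul (f g : ι → ℂ) : cdg hR f * cdg hR g = cdg hR (fun i => f i * g i) :=
  conj_diag_mul hR.1 f g

private lemma pinv_eq : pinv hR.1 = cdg hR (fun i => (((hR.1.eigenvalues i)⁻¹ : ℝ) : ℂ)) := rfl

private lemma R_eq : R = cdg hR (fun i => ((hR.1.eigenvalues i : ℝ) : ℂ)) := spectral hR.1

lemma pinv_herm : (pinv hR.1)ᴴ = pinv hR.1 := conj_diag_herm hR.1 _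

lemma pinv_comm : R * pinv hR.1 = pinv hR.1 * R := by
  rw [pinv_eq hR]
  rw [congrArg (· * cdg hR _) (R_eq hR), congrArg (cdg hR _ * ·) (R_eq hR)]
  rw [cdg_mul, cdg_mul]
  refine congrArg (cdg hR) ?_
  funext i
  ring

lemma mul_pinv_mul : R * pinv hR.1 * R = R := by
  rw [pinv_eq hR]
  conv_rhs => rw [R_eq hR]
  rw [congrArg (fun X => X * cdg hR _ * X) (R_eq hR)]
  rw [cdg_mul, cdg_mul]
  refine congrArg (cdg hR) ?_
  funext i
  by_cases h : hR.1.eigenvalues i = 0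
  · simp [h]
  · push_cast
    field_simp

lemma proj_idem : (R * pinv hR.1) * (R * pinv hR.1) = R * pinv hR.1 := by
  calc (R * pinv hR.1) * (R * pinv hR.1) = (R * pinv hR.1 * R) * pinv hR.1 := by
        simp only [Matrix.mul_assoc]
    _ = R * pinv hR.1 := by rw [mul_pinv_mul hR]

lemma proj_herm : (R * pinv hR.1)ᴴ = R * pinv hR.1 := by
  rw [Matrix.conjTranspose_mul, pinv_herm hR, hR.1.eq, ← pinv_comm hR]

lemma proj_contract : (1 - R * pinv hR.1).PosSemidef := by
  have h1 : (1 : Matrix ι ι ℂ) = cdg hR (fun _ => (1:ℂ)) := by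
    rw [cdg, Matrix.diagonal_one, Matrix.mul_one, U_mul_star hR.1]
  have h2 : R * pinv hR.1 = cdg hR
      (fun i => ((hR.1.eigenvalues i : ℝ) : ℂ) * (((hR.1.eigenvalues i)⁻¹ : ℝ) : ℂ)) := by
    rw [pinv_eq hR, congrArg (· * cdg hR _) (R_eq hR), cdg_mul]
  rw [h1, h2, cdg, cdg, ← Matrix.sub_mul, ← Matrix.mul_sub, Matrix.diagonal_sub]
  have := conj_diag_psd hR.1 (fun i => 1 - hR.1.eigenvalues i * (hR.1.eigenvalues i)⁻¹)
    (fun i => by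
      by_cases h : hR.1.eigenvalues i = 0
      · simp [h]
      · simp [h, mul_inv_cancel₀ h])
  convert this using 3
  ext i
  push_cast
  ring

lemma proj_mul_self : (R * pinv hR.1) * R = R := by
  rw [pinv_comm hR, Matrix.mul_assoc, ← Matrix.mul_assoc, ← pinv_comm hR, mul_pinv_mul hR]

/-- If `C Cᴴ ≤ R²` then the support projection of `R` absorbs `C`. -/
lemma support_absorb (C : Matrix ι ι ℂ) (hle : (R * R - C * Cᴴ).PosSemidef) :
    (R * pinv hR.1) * C = C := by
  set Pp : Matrix ι ι ℂ := R * pinv hR.1 with hPp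
  have hPh : (1 - Pp)ᴴ = 1 - Pp := by
    rw [Matrix.conjTranspose_sub, hPp, proj_herm hR, Matrix.conjTranspose_one]
  have hRproj : (1 - Pp) * R = 0 := by
    rw [Matrix.sub_mul, Matrix.one_mul, hPp, proj_mul_self hR, sub_self]
  have hS2 : ((1 - Pp) * (R * R - C * Cᴴ) * (1 - Pp)ᴴ).PosSemidef :=
    hle.mul_mul_conjTranspose_same (1 - Pp)
  have hkey : (1 - Pp) * (R * R) * (1 - Pp)ᴴ = 0 := by
    rw [hPh, ← Matrix.mul_assoc, Matrix.mul_assoc ((1 - Pp) * R)]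
    rw [show (1 - Pp) * R = 0 from hRproj]
    simp
  have hS1eq : (1 - Pp) * (C * Cᴴ) * (1 - Pp)ᴴ =
      ((1 - Pp) * C) * ((1 - Pp) * C)ᴴ := by
    rw [Matrix.conjTranspose_mul]
    simp only [Matrix.mul_assoc]
  have hsum : ((1 - Pp) * C) * ((1 - Pp) * C)ᴴ +
      ((1 - Pp) * (R * R - C * Cᴴ) * (1 - Pp)ᴴ) = 0 := by
    rw [← hS1eq, ← Matrix.add_mul, ← Matrix.mul_add, add_sub_cancel]
    exact hkey
  have hS1 : (((1 - Pp) * C) * ((1 - Pp) * C)ᴴ).PosSemidef :=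
    Matrix.posSemidef_self_mul_conjTranspose _
  have htr : (((1 - Pp) * C) * ((1 - Pp) * C)ᴴ).trace.re = 0 := by
    have h0 := congrArg (fun M : Matrix ι ι ℂ => M.trace.re) hsum
    simp only [Matrix.trace_add, Complex.add_re, Matrix.trace_zero, Complex.zero_re] at h0
    have n1 := psd_trace_re_nonneg hS1
    have n2 := psd_trace_re_nonneg hS2
    linarith
  have hz : (1 - Pp) * C = 0 := by
    set Z := (1 - Pp) * C with hZ
    have h3 : ((Zᴴ)ᴴ * Zᴴ).trace.re = 0 := by
      simpa [Matrix.conjTranspose_conjTranspose] using htr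
    rw [trace_conjTranspose_mul_self_re] at h3
    have hz' : Zᴴ = 0 := by
      ext i j
      have h4 := (Finset.sum_eq_zero_iff_of_nonneg (fun j' _ =>
        Finset.sum_nonneg fun i' _ => sq_nonneg (‖Zᴴ i' j'‖))).mp h3 j
          (Finset.mem_univ j)
      have h5 := (Finset.sum_eq_zero_iff_of_nonneg (fun i' _ =>
        sq_nonneg (‖Zᴴ i' j‖))).mp h4 i (Finset.mem_univ i)
      have habs : ‖Zᴴ i j‖ = 0 := by
        nlinarith [norm_nonneg (Zᴴ i j)]
      simpa using norm_eq_zero.mp habs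
    have h6 : Z = 0 := by
      have := congrArg Matrix.conjTranspose hz'
      simpa using this
    exact h6
  have h7 : C - Pp * C = 0 := by rw [← hz, Matrix.sub_mul, Matrix.one_mul]
  have := sub_eq_zero.mp h7
  exact this.symm

end pinvPSD



lemma dot_adjoint (A : Matrix ι ι ℂ) (x y : ι → ℂ) :
    star x ⬝ᵥ (A *ᵥ y) = star (Aᴴ *ᵥ x) ⬝ᵥ y := by
  rw [Matrix.star_mulVec, Matrix.conjTranspose_conjTranspose, dotProduct_mulVec]

lemma dot_self_re (a : ι → ℂ) : (star a ⬝ᵥ a).re = ∑ i, ‖a i‖ ^ 2 := by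
  rw [dotProduct]
  simp only [Complex.re_sum, Pi.star_apply]
  refine Finset.sum_congr rfl fun i _ => ?_
  rw [Complex.star_def, Complex.conj_mul']
  norm_cast

lemma dot_self_re_nonneg (a : ι → ℂ) : 0 ≤ (star a ⬝ᵥ a).re := by
  rw [dot_self_re]; positivity

lemma dot_self_im (a : ι → ℂ) : (star a ⬝ᵥ a).im = 0 := by
  have := dotProduct_star_self_nonneg a
  exact ((Complex.le_def.mp this).2).symm

lemma dot_cs (a b : ι → ℂ) : (star a ⬝ᵥ b).re ≤
    Real.sqrt ((star a ⬝ᵥ a).re) * Real.sqrt ((star b ⬝ᵥ b).re) := by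
  rw [dot_self_re, dot_self_re]
  calc (star a ⬝ᵥ b).re ≤ ∑ i, ‖a i‖ * ‖b i‖ := by
        rw [dotProduct, Complex.re_sum]
        refine Finset.sum_le_sum fun i _ => ?_
        calc (star a i * b i).re ≤ ‖star a i * b i‖ := Complex.re_le_norm _
          _ = ‖a i‖ * ‖b i‖ := by
              rw [norm_mul]
              simp [Pi.star_apply, Complex.star_def]
    _ ≤ _ := sum_le_sqrt_mul_sqrt Finset.univ _ _
        (fun i _ => norm_nonneg _) (fun i _ => norm_nonneg _)

lemma psd_dot_le {M : Matrix ι ι ℂ} (h : (1 - M).PosSemidef) (x : ι → ℂ) :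
    (star x ⬝ᵥ (M *ᵥ x)).re ≤ (star x ⬝ᵥ x).re := by
  have h2 := h.dotProduct_mulVec_nonneg x
  rw [Matrix.sub_mulVec, dotProduct_sub, Matrix.one_mulVec] at h2
  have := (Complex.le_def.mp h2).1
  simp only [Complex.zero_re, Complex.sub_re] at this
  linarith

lemma contraction_mulVec {W : Matrix ι ι ℂ} (hW : (1 - W * Wᴴ).PosSemidef) (x : ι → ℂ) :
    (star (Wᴴ *ᵥ x) ⬝ᵥ (Wᴴ *ᵥ x)).re ≤ (star x ⬝ᵥ x).re := by
  have h1 : star x ⬝ᵥ ((W * Wᴴ) *ᵥ x) = star (Wᴴ *ᵥ x) ⬝ᵥ (Wᴴ *ᵥ x) := by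
    rw [← Matrix.mulVec_mulVec]
    exact dot_adjoint W x _
  rw [← h1]
  exact psd_dot_le hW x

lemma sum_mulVec' {s : ℕ} (A : Fin s → Matrix ι ι ℂ) (v : ι → ℂ) :
    (∑ μ, A μ) *ᵥ v = ∑ μ, (A μ) *ᵥ v := by
  exact map_sum (AddMonoidHom.mk' (fun M : Matrix ι ι ℂ => M *ᵥ v)
    fun A B => Matrix.add_mulVec A B v) A Finset.univ

lemma dot_sum {s : ℕ} (x : ι → ℂ) (w : Fin s → ι → ℂ) :
    x ⬝ᵥ (∑ μ, w μ) = ∑ μ, x ⬝ᵥ w μ := by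
  simp only [dotProduct, Finset.sum_apply, Finset.mul_sum]
  exact Finset.sum_comm

/-- Key contraction lemma: a "Kraus-type" combination of contractions is a contraction. -/
lemma contraction_sum {s : ℕ} (P Q : Fin s → Matrix ι ι ℂ) (W : Matrix ι ι ℂ)
    (hP : (1 - ∑ μ, P μ * (P μ)ᴴ).PosSemidef)
    (hQ : (1 - ∑ μ, Q μ * (Q μ)ᴴ).PosSemidef)
    (hW : (1 - W * Wᴴ).PosSemidef) :
    (1 - (∑ μ, P μ * W * (Q μ)ᴴ)ᴴ * (∑ μ, P μ * W * (Q μ)ᴴ)).PosSemidef := by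
  set T : Matrix ι ι ℂ := ∑ μ, P μ * W * (Q μ)ᴴ with hT
  refine Matrix.PosSemidef.of_dotProduct_mulVec_nonneg ?_ ?_
  · exact Matrix.isHermitian_one.sub (Matrix.isHermitian_conjTranspose_mul_self T)
  intro x
  set u : ι → ℂ := T *ᵥ x with hu
  have hdot : star x ⬝ᵥ ((1 - Tᴴ * T) *ᵥ x) = (star x ⬝ᵥ x) - (star u ⬝ᵥ u) := by
    rw [Matrix.sub_mulVec, dotProduct_sub, Matrix.one_mulVec]
    congr 1
    rw [← Matrix.mulVec_mulVec, dot_adjoint, Matrix.conjTranspose_conjTranspose]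
  rw [hdot]
  -- reduce to real inequality
  have him : ((star x ⬝ᵥ x) - (star u ⬝ᵥ u)).im = 0 := by
    simp [Complex.sub_im, dot_self_im]
  have hre : (star u ⬝ᵥ u).re ≤ (star x ⬝ᵥ x).re := by
    -- the core computation
    set a : Fin s → ι → ℂ := fun μ => Wᴴ *ᵥ ((P μ)ᴴ *ᵥ u) with ha
    set b : Fin s → ι → ℂ := fun μ => (Q μ)ᴴ *ᵥ x with hb
    have h1 : star u ⬝ᵥ u = ∑ μ, star (a μ) ⬝ᵥ b μ := by
      calc star u ⬝ᵥ u = star u ⬝ᵥ (T *ᵥ x) := rfl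
        _ = ∑ μ, star u ⬝ᵥ ((P μ * W * (Q μ)ᴴ) *ᵥ x) := by
            rw [hT, sum_mulVec', dot_sum]
        _ = ∑ μ, star (a μ) ⬝ᵥ b μ := by
            refine Finset.sum_congr rfl fun μ _ => ?_
            rw [← Matrix.mulVec_mulVec, ← Matrix.mulVec_mulVec, dot_adjoint,
              dot_adjoint]
    set na : Fin s → ℝ := fun μ => Real.sqrt ((star (a μ) ⬝ᵥ (a μ)).re) with hna
    set nb : Fin s → ℝ := fun μ => Real.sqrt ((star (b μ) ⬝ᵥ (b μ)).re) with hnb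
    have h2 : (star u ⬝ᵥ u).re ≤ ∑ μ, na μ * nb μ := by
      rw [h1, Complex.re_sum]
      exact Finset.sum_le_sum fun μ _ => dot_cs (a μ) (b μ)
    have h3 : ∑ μ, na μ * nb μ ≤
        Real.sqrt (∑ μ, na μ ^ 2) * Real.sqrt (∑ μ, nb μ ^ 2) :=
      sum_le_sqrt_mul_sqrt Finset.univ na nb (fun μ _ => Real.sqrt_nonneg _)
        (fun μ _ => Real.sqrt_nonneg _)
    have hna2 : ∑ μ, na μ ^ 2 ≤ (star u ⬝ᵥ u).re := by
      have e1 : ∀ μ, na μ ^ 2 = (star (a μ) ⬝ᵥ (a μ)).re := fun μ =>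
        Real.sq_sqrt (dot_self_re_nonneg _)
      calc ∑ μ, na μ ^ 2 = ∑ μ, (star (a μ) ⬝ᵥ (a μ)).re := by
            exact Finset.sum_congr rfl fun μ _ => e1 μ
        _ ≤ ∑ μ, (star ((P μ)ᴴ *ᵥ u) ⬝ᵥ ((P μ)ᴴ *ᵥ u)).re :=
            Finset.sum_le_sum fun μ _ => contraction_mulVec hW _
        _ = (star u ⬝ᵥ ((∑ μ, P μ * (P μ)ᴴ) *ᵥ u)).re := by
            rw [sum_mulVec', dot_sum, Complex.re_sum]
            refine Finset.sum_congr rfl fun μ _ => ?_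
            have h5 := dot_adjoint (P μ) u ((P μ)ᴴ *ᵥ u)
            rw [Matrix.mulVec_mulVec] at h5
            exact (congrArg Complex.re h5).symm
        _ ≤ (star u ⬝ᵥ u).re := psd_dot_le hP u
    have hnb2 : ∑ μ, nb μ ^ 2 ≤ (star x ⬝ᵥ x).re := by
      have e1 : ∀ μ, nb μ ^ 2 = (star (b μ) ⬝ᵥ (b μ)).re := fun μ =>
        Real.sq_sqrt (dot_self_re_nonneg _)
      calc ∑ μ, nb μ ^ 2 = ∑ μ, (star (b μ) ⬝ᵥ (b μ)).re := by
            exact Finset.sum_congr rfl fun μ _ => e1 μ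
        _ = (star x ⬝ᵥ ((∑ μ, Q μ * (Q μ)ᴴ) *ᵥ x)).re := by
            rw [sum_mulVec', dot_sum, Complex.re_sum]
            refine Finset.sum_congr rfl fun μ _ => ?_
            have h5 := dot_adjoint (Q μ) x ((Q μ)ᴴ *ᵥ x)
            rw [Matrix.mulVec_mulVec] at h5
            exact (congrArg Complex.re h5).symm
        _ ≤ (star x ⬝ᵥ x).re := psd_dot_le hQ x
    -- combine
    set α : ℝ := (star u ⬝ᵥ u).re
    set β : ℝ := (star x ⬝ᵥ x).re
    have hα : 0 ≤ α := dot_self_re_nonneg u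
    have hβ : 0 ≤ β := dot_self_re_nonneg x
    have hge : α ≤ Real.sqrt α * Real.sqrt β := by
      calc α ≤ ∑ μ, na μ * nb μ := h2
        _ ≤ Real.sqrt (∑ μ, na μ ^ 2) * Real.sqrt (∑ μ, nb μ ^ 2) := h3
        _ ≤ Real.sqrt α * Real.sqrt β := by
            have s1 : 0 ≤ ∑ μ, na μ ^ 2 := Finset.sum_nonneg fun μ _ => sq_nonneg _
            have s2 : 0 ≤ ∑ μ, nb μ ^ 2 := Finset.sum_nonneg fun μ _ => sq_nonneg _
            exact mul_le_mul (Real.sqrt_le_sqrt hna2) (Real.sqrt_le_sqrt hnb2)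
              (Real.sqrt_nonneg _) (Real.sqrt_nonneg _)
    nlinarith [Real.sq_sqrt hα, Real.sq_sqrt hβ, Real.sqrt_nonneg α, Real.sqrt_nonneg β,
      sq_nonneg (Real.sqrt α - Real.sqrt β)]
  rw [Complex.le_def]
  constructor
  · simp only [Complex.zero_re, Complex.sub_re]; linarith
  · simp [him]

end base

section layer6
variable {ι : Type*} [Fintype ι] [DecidableEq ι]

lemma psd_sum {α : Type*} (s : Finset α) (f : α → Matrix ι ι ℂ)
    (h : ∀ i ∈ s, (f i).PosSemidef) : (∑ i ∈ s, f i).PosSemidef := by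
  classical
  induction s using Finset.induction_on with
  | empty => simpa using Matrix.PosSemidef.zero
  | @insert a s' hx ih =>
    rw [Finset.sum_insert hx]
    exact (h a (Finset.mem_insert_self a s')).add
      (ih fun i hi => h i (Finset.mem_insert_of_mem hi))

lemma frob_zero {Z : Matrix ι ι ℂ} (h : (Zᴴ * Z).trace.re = 0) : Z = 0 := by
  rw [trace_conjTranspose_mul_self_re] at h
  ext i j
  have h4 := (Finset.sum_eq_zero_iff_of_nonneg (fun j' _ =>
    Finset.sum_nonneg fun i' _ => sq_nonneg (‖Z i' j'‖))).mp h j (Finset.mem_univ j)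
  have h5 := (Finset.sum_eq_zero_iff_of_nonneg (fun i' _ =>
    sq_nonneg (‖Z i' j‖))).mp h4 i (Finset.mem_univ i)
  have habs : ‖Z i j‖ = 0 := by nlinarith [norm_nonneg (Z i j)]
  simpa using norm_eq_zero.mp habs

lemma psd_trace_zero {A : Matrix ι ι ℂ} (hA : A.PosSemidef) (h : A.trace.re = 0) : A = 0 := by
  have hS : matSqrt A * matSqrt A = A := matSqrt_mul_self hA
  have hS' : (matSqrt A)ᴴ * matSqrt A = A := by rw [matSqrt_herm hA, hS]
  have h0 : ((matSqrt A)ᴴ * matSqrt A).trace.re = 0 := by rw [hS']; exact h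
  have := frob_zero h0
  rw [← hS, this, Matrix.mul_zero]

lemma frob_contract {Z C : Matrix ι ι ℂ} (hZ : (1 - Zᴴ * Z).PosSemidef) :
    ((Z * C)ᴴ * (Z * C)).trace.re ≤ (Cᴴ * C).trace.re := by
  have h1 : Cᴴ * C - (Z * C)ᴴ * (Z * C) = Cᴴ * (1 - Zᴴ * Z) * C := by
    rw [Matrix.conjTranspose_mul]
    noncomm_ring
  have h2 : (Cᴴ * (1 - Zᴴ * Z) * C).PosSemidef := hZ.conjTranspose_mul_mul_same C
  have h3 := psd_trace_re_nonneg h2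
  rw [← h1, Matrix.trace_sub, Complex.sub_re] at h3
  linarith

/-- von Neumann-type trace inequality for contractions, via explicit polar decomposition. -/
lemma trace_contraction {N T : Matrix ι ι ℂ} (hT : (1 - Tᴴ * T).PosSemidef) :
    (T * N).trace.re ≤ (matSqrt (Nᴴ * N)).trace.re := by
  have hS : (Nᴴ * N).PosSemidef := Matrix.posSemidef_conjTranspose_mul_self N
  set R : Matrix ι ι ℂ := matSqrt (Nᴴ * N) with hRdef
  have hR : R.PosSemidef := matSqrt_posSemidef hS
  have hRR : R * R = Nᴴ * N := matSqrt_mul_self hS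
  set V : Matrix ι ι ℂ := N * pinv hR.1 with hVdef
  have habs : (R * pinv hR.1) * Nᴴ = Nᴴ := by
    refine support_absorb hR Nᴴ ?_
    rw [hRR, Matrix.conjTranspose_conjTranspose, sub_self]
    exact Matrix.PosSemidef.zero
  have hNproj : N * (R * pinv hR.1) = N := by
    have := congrArg Matrix.conjTranspose habs
    rwa [Matrix.conjTranspose_mul, proj_herm hR, Matrix.conjTranspose_conjTranspose] at this
  have hVR : V * R = N := by
    rw [hVdef, Matrix.mul_assoc, ← pinv_comm hR]
    exact hNproj
  have hVV : Vᴴ * V = R * pinv hR.1 := by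
    rw [hVdef, Matrix.conjTranspose_mul, pinv_herm hR]
    calc pinv hR.1 * Nᴴ * (N * pinv hR.1)
        = pinv hR.1 * (Nᴴ * N) * pinv hR.1 := by simp only [Matrix.mul_assoc]
      _ = pinv hR.1 * (R * R) * pinv hR.1 := by rw [hRR]
      _ = (pinv hR.1 * R) * (R * pinv hR.1) := by simp only [Matrix.mul_assoc]
      _ = (R * pinv hR.1) * (R * pinv hR.1) := by rw [← pinv_comm hR]
      _ = R * pinv hR.1 := proj_idem hR
  have hTV : (1 - (T * V)ᴴ * (T * V)).PosSemidef := by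
    have h1 : 1 - (T * V)ᴴ * (T * V) = Vᴴ * (1 - Tᴴ * T) * V + (1 - Vᴴ * V) := by
      rw [Matrix.conjTranspose_mul]
      noncomm_ring
    rw [h1]
    exact (hT.conjTranspose_mul_mul_same V).add (by rw [hVV]; exact proj_contract hR)
  -- sqrt of R
  set SR : Matrix ι ι ℂ := matSqrt R with hSRdef
  have hSR : SR.PosSemidef := matSqrt_posSemidef hR
  have hSRSR : SR * SR = R := matSqrt_mul_self hR
  have htr : (T * N).trace = (SRᴴ * ((T * V) * SR)).trace := by
    rw [matSqrt_herm hR]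
    have e1 : T * V * SR * SR = T * N := by
      calc T * V * SR * SR = T * V * (SR * SR) := by rw [Matrix.mul_assoc]
        _ = T * (V * R) := by rw [hSRSR, Matrix.mul_assoc]
        _ = T * N := by rw [hVR]
    calc (T * N).trace = ((T * V * SR) * SR).trace := by rw [e1]
      _ = (SR * (T * V * SR)).trace := Matrix.trace_mul_comm _ _
      _ = _ := by rw [Matrix.mul_assoc]
  have hcs := trace_cs SR ((T * V) * SR)
  have hfrob : (((T * V) * SR)ᴴ * ((T * V) * SR)).trace.re ≤ (SRᴴ * SR).trace.re :=
    frob_contract hTV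
  have hRtr : (SRᴴ * SR).trace.re = R.trace.re := by
    rw [matSqrt_herm hR, hSRSR]
  calc (T * N).trace.re = (SRᴴ * ((T * V) * SR)).trace.re := by rw [htr]
    _ ≤ Real.sqrt ((SRᴴ * SR).trace.re) * Real.sqrt ((((T * V) * SR)ᴴ * ((T * V) * SR)).trace.re) :=
        hcs
    _ ≤ Real.sqrt ((SRᴴ * SR).trace.re) * Real.sqrt ((SRᴴ * SR).trace.re) := by
        refine mul_le_mul_of_nonneg_left (Real.sqrt_le_sqrt hfrob) (Real.sqrt_nonneg _)
    _ = (SRᴴ * SR).trace.re := by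
        rw [Real.mul_self_sqrt]
        rw [hRtr]
        exact psd_trace_re_nonneg hR
    _ = R.trace.re := hRtr

end layer6

section layer7
variable {n : ℕ}

lemma kraus_psd {s : ℕ} (M : Fin s → Matrix (Fin n) (Fin n) ℂ)
    {ρ : Matrix (Fin n) (Fin n) ℂ} (hρ : ρ.PosSemidef) : (kraus M ρ).PosSemidef :=
  psd_sum Finset.univ _ fun μ _ => hρ.mul_mul_conjTranspose_same (M μ)

lemma mul_sqrt_conj {A : Matrix (Fin n) (Fin n) ℂ} (hA : A.PosSemidef)
    (M : Matrix (Fin n) (Fin n) ℂ) :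
    (M * matSqrt A) * (M * matSqrt A)ᴴ = M * A * Mᴴ := by
  rw [Matrix.conjTranspose_mul, matSqrt_herm hA]
  calc M * matSqrt A * (matSqrt A * Mᴴ) = M * (matSqrt A * matSqrt A) * Mᴴ := by
        simp only [Matrix.mul_assoc]
    _ = M * A * Mᴴ := by rw [matSqrt_mul_self hA]

/-- The per-outcome inequality. -/
lemma per_y {s : ℕ} (M : Fin s → Matrix (Fin n) (Fin n) ℂ)
    {A B W₀ : Matrix (Fin n) (Fin n) ℂ}
    (hA : A.PosSemidef) (hB : B.PosSemidef) (hW : (1 - W₀ * W₀ᴴ).PosSemidef) :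
    (W₀ * (matSqrt B * ((∑ μ, (M μ)ᴴ * M μ) * matSqrt A))).trace.re ≤
    (matSqrt (matSqrt (kraus M A) * kraus M B * matSqrt (kraus M A))).trace.re := by
  have hX : (kraus M A).PosSemidef := kraus_psd M hA
  have hY : (kraus M B).PosSemidef := kraus_psd M hB
  set SA := matSqrt A with hSAdef
  set SB := matSqrt B with hSBdef
  set SX := matSqrt (kraus M A) with hSXdef
  set SY := matSqrt (kraus M B) with hSYdef
  have hSX : SX.PosSemidef := matSqrt_posSemidef hX
  have hSY : SY.PosSemidef := matSqrt_posSemidef hY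
  set P : Fin s → Matrix (Fin n) (Fin n) ℂ := fun μ => pinv hSX.1 * (M μ * SA) with hPdef
  set Q : Fin s → Matrix (Fin n) (Fin n) ℂ := fun μ => pinv hSY.1 * (M μ * SB) with hQdef
  -- the key support facts
  have hkrausX : ∀ μ : Fin s, (SX * SX - (M μ * SA) * (M μ * SA)ᴴ).PosSemidef := by
    intro μ
    rw [matSqrt_mul_self hX, mul_sqrt_conj hA]
    have e : kraus M A - M μ * A * (M μ)ᴴ = ∑ ν ∈ Finset.univ.erase μ, M ν * A * (M ν)ᴴ := by
      rw [kraus, ← Finset.sum_erase_add _ _ (Finset.mem_univ μ), add_sub_cancel_right]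
    rw [e]
    exact psd_sum _ _ fun ν _ => hA.mul_mul_conjTranspose_same (M ν)
  have hkrausY : ∀ μ : Fin s, (SY * SY - (M μ * SB) * (M μ * SB)ᴴ).PosSemidef := by
    intro μ
    rw [matSqrt_mul_self hY, mul_sqrt_conj hB]
    have e : kraus M B - M μ * B * (M μ)ᴴ = ∑ ν ∈ Finset.univ.erase μ, M ν * B * (M ν)ᴴ := by
      rw [kraus, ← Finset.sum_erase_add _ _ (Finset.mem_univ μ), add_sub_cancel_right]
    rw [e]
    exact psd_sum _ _ fun ν _ => hB.mul_mul_conjTranspose_same (M ν)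
  have hSXP : ∀ μ, SX * P μ = M μ * SA := by
    intro μ
    rw [hPdef, ← Matrix.mul_assoc]
    exact support_absorb hSX _ (hkrausX μ)
  have hSYQ : ∀ μ, SY * Q μ = M μ * SB := by
    intro μ
    rw [hQdef, ← Matrix.mul_assoc]
    exact support_absorb hSY _ (hkrausY μ)
  -- contraction hypotheses
  have hPP : (1 - ∑ μ, P μ * (P μ)ᴴ).PosSemidef := by
    have e : ∑ μ, P μ * (P μ)ᴴ = SX * pinv hSX.1 := by
      have e1 : ∀ μ : Fin s, P μ * (P μ)ᴴ =
          pinv hSX.1 * ((M μ * SA) * (M μ * SA)ᴴ) * pinv hSX.1 := by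
        intro μ
        rw [hPdef, Matrix.conjTranspose_mul, pinv_herm hSX]
        simp only [Matrix.mul_assoc]
      rw [Finset.sum_congr rfl fun μ _ => e1 μ, ← Finset.sum_mul, ← Finset.mul_sum]
      have e2 : ∑ μ, (M μ * SA) * (M μ * SA)ᴴ = SX * SX := by
        rw [matSqrt_mul_self hX, kraus]
        exact Finset.sum_congr rfl fun μ _ => mul_sqrt_conj hA (M μ)
      rw [e2]
      calc pinv hSX.1 * (SX * SX) * pinv hSX.1
          = (pinv hSX.1 * SX) * (SX * pinv hSX.1) := by simp only [Matrix.mul_assoc]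
        _ = (SX * pinv hSX.1) * (SX * pinv hSX.1) := by rw [← pinv_comm hSX]
        _ = SX * pinv hSX.1 := proj_idem hSX
    rw [e]
    exact proj_contract hSX
  have hQQ : (1 - ∑ μ, Q μ * (Q μ)ᴴ).PosSemidef := by
    have e : ∑ μ, Q μ * (Q μ)ᴴ = SY * pinv hSY.1 := by
      have e1 : ∀ μ : Fin s, Q μ * (Q μ)ᴴ =
          pinv hSY.1 * ((M μ * SB) * (M μ * SB)ᴴ) * pinv hSY.1 := by
        intro μ
        rw [hQdef, Matrix.conjTranspose_mul, pinv_herm hSY]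
        simp only [Matrix.mul_assoc]
      rw [Finset.sum_congr rfl fun μ _ => e1 μ, ← Finset.sum_mul, ← Finset.mul_sum]
      have e2 : ∑ μ, (M μ * SB) * (M μ * SB)ᴴ = SY * SY := by
        rw [matSqrt_mul_self hY, kraus]
        exact Finset.sum_congr rfl fun μ _ => mul_sqrt_conj hB (M μ)
      rw [e2]
      calc pinv hSY.1 * (SY * SY) * pinv hSY.1
          = (pinv hSY.1 * SY) * (SY * pinv hSY.1) := by simp only [Matrix.mul_assoc]
        _ = (SY * pinv hSY.1) * (SY * pinv hSY.1) := by rw [← pinv_comm hSY]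
        _ = SY * pinv hSY.1 := proj_idem hSY
    rw [e]
    exact proj_contract hSY
  set T : Matrix (Fin n) (Fin n) ℂ := ∑ μ, P μ * W₀ * (Q μ)ᴴ with hTdef
  have hT : (1 - Tᴴ * T).PosSemidef := contraction_sum P Q W₀ hPP hQQ hW
  -- trace identity
  have htr : (W₀ * (SB * ((∑ μ, (M μ)ᴴ * M μ) * SA))).trace = (T * (SY * SX)).trace := by
    have e1 : W₀ * (SB * ((∑ μ, (M μ)ᴴ * M μ) * SA)) =
        ∑ μ, W₀ * ((M μ * SB)ᴴ * (M μ * SA)) := by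
      rw [Finset.sum_mul, Finset.mul_sum, Finset.mul_sum]
      refine Finset.sum_congr rfl fun μ _ => ?_
      rw [Matrix.conjTranspose_mul, matSqrt_herm hB, ← hSBdef]
      simp only [Matrix.mul_assoc]
    rw [e1, Matrix.trace_sum, hTdef, Finset.sum_mul, Matrix.trace_sum]
    refine Finset.sum_congr rfl fun μ _ => ?_
    rw [← hSYQ μ, ← hSXP μ, Matrix.conjTranspose_mul, matSqrt_herm hY]
    calc (W₀ * ((Q μ)ᴴ * SY * (SX * P μ))).trace
        = ((W₀ * ((Q μ)ᴴ * (SY * (SX * P μ))))).trace := by simp only [Matrix.mul_assoc]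
      _ = ((W₀ * ((Q μ)ᴴ * (SY * SX))) * P μ).trace := by simp only [Matrix.mul_assoc]
      _ = ((P μ * (W₀ * ((Q μ)ᴴ * (SY * SX))))).trace := Matrix.trace_mul_comm _ _
      _ = (P μ * W₀ * (Q μ)ᴴ * (SY * SX)).trace := by simp only [Matrix.mul_assoc]
  rw [htr]
  have := trace_contraction (N := SY * SX) hT
  have e2 : (SY * SX)ᴴ * (SY * SX) = SX * kraus M B * SX := by
    rw [Matrix.conjTranspose_mul, matSqrt_herm hY, matSqrt_herm hX]
    calc SX * SY * (SY * SX) = SX * (SY * SY) * SX := by simp only [Matrix.mul_assoc]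
      _ = SX * kraus M B * SX := by rw [matSqrt_mul_self hY]
  rw [e2] at this
  exact this

/-- Superadditivity of the fidelity root along a Kraus decomposition. -/
lemma root_superadd {m sa : ℕ} (Ma : Fin m → Fin sa → Matrix (Fin n) (Fin n) ℂ)
    (hMa : ∑ y, ∑ μ, (Ma y μ)ᴴ * Ma y μ = 1)
    {A B : Matrix (Fin n) (Fin n) ℂ} (hA : A.PosSemidef) (hB : B.PosSemidef) :
    (matSqrt (matSqrt A * B * matSqrt A)).trace.re ≤
    ∑ y, (matSqrt (matSqrt (kraus (Ma y) A) * kraus (Ma y) B * matSqrt (kraus (Ma y) A))).trace.re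
    := by
  obtain ⟨SA, hSA⟩ : ∃ X, X = matSqrt A := ⟨_, rfl⟩
  obtain ⟨SB, hSB⟩ : ∃ X, X = matSqrt B := ⟨_, rfl⟩
  obtain ⟨N, hN⟩ : ∃ X, X = SB * SA := ⟨_, rfl⟩
  have hNH : Nᴴ = SA * SB := by
    rw [hN, Matrix.conjTranspose_mul, hSA, hSB, matSqrt_herm hA, matSqrt_herm hB]
  have hNN : Nᴴ * N = matSqrt A * B * matSqrt A := by
    rw [hNH, hN, hSA, hSB]
    calc matSqrt A * matSqrt B * (matSqrt B * matSqrt A)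
        = matSqrt A * (matSqrt B * matSqrt B) * matSqrt A := by simp only [Matrix.mul_assoc]
      _ = _ := by rw [matSqrt_mul_self hB]
  have hSpsd : (matSqrt A * B * matSqrt A).PosSemidef := by
    rw [← hNN]; exact Matrix.posSemidef_conjTranspose_mul_self N
  obtain ⟨R, hRdef⟩ : ∃ X, X = matSqrt (matSqrt A * B * matSqrt A) := ⟨_, rfl⟩
  have hR : R.PosSemidef := by rw [hRdef]; exact matSqrt_posSemidef hSpsd
  have hRR : R * R = Nᴴ * N := by rw [hRdef, matSqrt_mul_self hSpsd, hNN]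
  obtain ⟨W₀, hWdef⟩ : ∃ X, X = pinv hR.1 * Nᴴ := ⟨_, rfl⟩
  have hWH : W₀ᴴ = N * pinv hR.1 := by
    rw [hWdef, Matrix.conjTranspose_mul, pinv_herm hR, Matrix.conjTranspose_conjTranspose]
  have hW₀N : W₀ * N = R := by
    rw [hWdef, Matrix.mul_assoc, ← hRR]
    calc pinv hR.1 * (R * R) = (pinv hR.1 * R) * R := by simp only [Matrix.mul_assoc]
      _ = (R * pinv hR.1) * R := by rw [← pinv_comm hR]
      _ = R := proj_mul_self hR
  have hW : (1 - W₀ * W₀ᴴ).PosSemidef := by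
    have e : W₀ * W₀ᴴ = R * pinv hR.1 := by
      rw [hWH, hWdef]
      calc pinv hR.1 * Nᴴ * (N * pinv hR.1) = pinv hR.1 * (Nᴴ * N) * pinv hR.1 := by
            simp only [Matrix.mul_assoc]
        _ = (pinv hR.1 * R) * (R * pinv hR.1) := by rw [← hRR]; simp only [Matrix.mul_assoc]
        _ = (R * pinv hR.1) * (R * pinv hR.1) := by rw [← pinv_comm hR]
        _ = R * pinv hR.1 := proj_idem hR
    rw [e]
    exact proj_contract hR
  have hdec : (W₀ * N).trace = ∑ y, (W₀ * (SB * ((∑ μ, (Ma y μ)ᴴ * Ma y μ) * SA))).trace := by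
    have e1 : W₀ * N = ∑ y, W₀ * (SB * ((∑ μ, (Ma y μ)ᴴ * Ma y μ) * SA)) := by
      calc W₀ * N = W₀ * (SB * ((∑ y, ∑ μ, (Ma y μ)ᴴ * Ma y μ) * SA)) := by
            rw [hMa, Matrix.one_mul, ← hN]
        _ = _ := by
            rw [Finset.sum_mul, Finset.mul_sum, Finset.mul_sum]
    rw [e1, Matrix.trace_sum]
  have hgoal : R.trace.re = ∑ y, (W₀ * (SB * ((∑ μ, (Ma y μ)ᴴ * Ma y μ) * SA))).trace.re := by
    rw [← hW₀N, hdec, Complex.re_sum]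
  rw [← hRdef, hgoal]
  refine Finset.sum_le_sum fun y _ => ?_
  have h := per_y (Ma y) hA hB hW
  rw [← hSA, ← hSB] at h
  exact h

end layer7

section layer8
variable {ι : Type*} [Fintype ι] [DecidableEq ι]

lemma psd_smul {A : Matrix ι ι ℂ} (hA : A.PosSemidef) {c : ℝ} (hc : 0 ≤ c) :
    (((c : ℝ) : ℂ) • A).PosSemidef := by
  refine Matrix.PosSemidef.of_dotProduct_mulVec_nonneg ?_ ?_
  · have : (((c : ℝ) : ℂ) • A)ᴴ = star ((c : ℝ) : ℂ) • Aᴴ := Matrix.conjTranspose_smul _ _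
    rw [Matrix.IsHermitian, this, hA.1.eq]
    congr 1
    rw [Complex.star_def, Complex.conj_ofReal]
  · intro x
    rw [Matrix.smul_mulVec, dotProduct_smul, smul_eq_mul]
    have h0 := hA.dotProduct_mulVec_nonneg x
    have him := (Complex.le_def.mp h0).2
    have hre := (Complex.le_def.mp h0).1
    have he : star x ⬝ᵥ (A *ᵥ x) = (((star x ⬝ᵥ (A *ᵥ x)).re : ℝ) : ℂ) :=
      Complex.ext rfl (by simpa using him.symm)
    rw [he, ← Complex.ofReal_mul, Complex.zero_le_real]
    simp only [Complex.zero_re] at hre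
    exact mul_nonneg hc hre

lemma matSqrt_smul {A : Matrix ι ι ℂ} (hA : A.PosSemidef) {c : ℝ} (hc : 0 ≤ c) :
    matSqrt (((c : ℝ) : ℂ) • A) = ((Real.sqrt c : ℝ) : ℂ) • matSqrt A := by
  refine matSqrt_unique (psd_smul (matSqrt_posSemidef hA) (Real.sqrt_nonneg c)) ?_
  rw [Matrix.smul_mul, Matrix.mul_smul, smul_smul, matSqrt_mul_self hA, ← Complex.ofReal_mul,
    Real.mul_self_sqrt hc]

lemma trace_smul_re (c : ℝ) (A : Matrix ι ι ℂ) :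
    ((((c : ℝ) : ℂ)) • A).trace.re = c * A.trace.re := by
  rw [Matrix.trace_smul, smul_eq_mul, Complex.re_ofReal_mul]

lemma inner_psd {X Y : Matrix ι ι ℂ} (hX : X.PosSemidef) (hY : Y.PosSemidef) :
    (matSqrt X * Y * matSqrt X).PosSemidef := by
  have := hY.conjTranspose_mul_mul_same (matSqrt X)
  rwa [matSqrt_herm hX] at this

lemma g_zero_left {X Y : Matrix ι ι ℂ} (hX : X.PosSemidef)
    (h : X.trace.re = 0) : (matSqrt (matSqrt X * Y * matSqrt X)).trace.re = 0 := by
  have hX0 : X = 0 := psd_trace_zero hX h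
  rw [hX0, matSqrt_zero, Matrix.zero_mul, Matrix.mul_zero, matSqrt_zero, Matrix.trace_zero]
  simp

lemma g_zero_right {X Y : Matrix ι ι ℂ} (hY : Y.PosSemidef)
    (h : Y.trace.re = 0) : (matSqrt (matSqrt X * Y * matSqrt X)).trace.re = 0 := by
  have hY0 : Y = 0 := psd_trace_zero hY h
  rw [hY0, Matrix.mul_zero, Matrix.zero_mul, matSqrt_zero, Matrix.trace_zero]
  simp

/-- Fidelity of the normalized states in terms of the unnormalized fidelity root. -/
lemma fidelity_scale {X Y : Matrix ι ι ℂ} (hX : X.PosSemidef) (hY : Y.PosSemidef) :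
    fidelity ((X.trace)⁻¹ • X) ((Y.trace)⁻¹ • Y) =
      (X.trace.re)⁻¹ * ((Y.trace.re)⁻¹ *
        ((matSqrt (matSqrt X * Y * matSqrt X)).trace.re) ^ 2) := by
  set p := X.trace.re with hp
  set q := Y.trace.re with hq
  have hp0 : 0 ≤ p := psd_trace_re_nonneg hX
  have hq0 : 0 ≤ q := psd_trace_re_nonneg hY
  have hXt : (X.trace)⁻¹ = (((p⁻¹ : ℝ)) : ℂ) := by
    rw [psd_trace_eq_re hX, ← Complex.ofReal_inv]
  have hYt : (Y.trace)⁻¹ = (((q⁻¹ : ℝ)) : ℂ) := by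
    rw [psd_trace_eq_re hY, ← Complex.ofReal_inv]
  rw [fidelity, hXt, hYt, matSqrt_smul hX (inv_nonneg.mpr hp0)]
  have hcomb : (((Real.sqrt p⁻¹ : ℝ) : ℂ) • matSqrt X) * ((((q⁻¹ : ℝ)) : ℂ) • Y) *
      (((Real.sqrt p⁻¹ : ℝ) : ℂ) • matSqrt X) =
      (((Real.sqrt p⁻¹ * Real.sqrt p⁻¹ * q⁻¹ : ℝ)) : ℂ) • (matSqrt X * Y * matSqrt X) := by
    simp only [Matrix.smul_mul, Matrix.mul_smul, smul_smul]
    rw [← Complex.ofReal_mul, ← Complex.ofReal_mul]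
    congr 2
    ring
  rw [hcomb, Real.mul_self_sqrt (inv_nonneg.mpr hp0)]
  rw [matSqrt_smul (inner_psd hX hY) (by positivity)]
  rw [trace_smul_re]
  rw [mul_pow, Real.sq_sqrt (by positivity)]
  ring

lemma term_calc (p q s πa g : ℝ) (hgp : p = 0 → g = 0) (hgq : q = 0 → g = 0) :
    p * ((q * πa / s) * (p⁻¹ * (q⁻¹ * g ^ 2))) = πa * (g ^ 2 / s) := by
  by_cases hp : p = 0
  · rw [hp, hgp hp]; simp
  by_cases hq : q = 0
  · rw [hq, hgq hq]; simp
  by_cases hs : s = 0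
  · rw [hs]; simp
  field_simp

lemma cs_step {m : ℕ} (g s : Fin m → ℝ) (hs : ∀ y, 0 ≤ s y) (hg : ∀ y, 0 ≤ g y)
    (hsum : ∑ y, s y = 1) (hzero : ∀ y, s y = 0 → g y = 0) :
    (∑ y, g y) ^ 2 ≤ ∑ y, (g y) ^ 2 / s y := by
  have h := Finset.sum_sq_le_sum_mul_sum_of_sq_eq_mul Finset.univ
    (r := g) (f := s) (g := fun y => (g y) ^ 2 / s y)
    (fun y _ => hs y) (fun y _ => div_nonneg (sq_nonneg _) (hs y))
    (fun y _ => by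
      by_cases h0 : s y = 0
      · rw [h0, hzero y h0]; simp
      · field_simp)
  rwa [hsum, one_mul] at h

lemma kraus_trace_total {n m s : ℕ} (M : Fin m → Fin s → Matrix (Fin n) (Fin n) ℂ)
    (hM : ∑ y, ∑ μ, (M y μ)ᴴ * M y μ = 1) (ρ : Matrix (Fin n) (Fin n) ℂ) :
    ∑ y, (kraus (M y) ρ).trace = ρ.trace := by
  have e1 : ∀ y, (kraus (M y) ρ).trace = ∑ μ, ((M y μ)ᴴ * M y μ * ρ).trace := by
    intro y
    rw [kraus, Matrix.trace_sum]
    exact Finset.sum_congr rfl fun μ _ => Matrix.trace_mul_cycle (M y μ) ρ (M y μ)ᴴ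
  calc ∑ y, (kraus (M y) ρ).trace = ∑ y, ∑ μ, ((M y μ)ᴴ * M y μ * ρ).trace := by
        exact Finset.sum_congr rfl fun y _ => e1 y
    _ = ((∑ y, ∑ μ, (M y μ)ᴴ * M y μ) * ρ).trace := by
        rw [Finset.sum_mul, Matrix.trace_sum]
        refine Finset.sum_congr rfl fun y _ => ?_
        rw [Finset.sum_mul, Matrix.trace_sum]
    _ = ρ.trace := by rw [hM, Matrix.one_mul]

end layer8

/-- For the two-particle quantum filter with true parameter `a`,
the process `π^a_k F(ρ̄_k, ρ^a_k)` is a submartingale: its conditional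
expectation over the outcome `y` (which occurs with probability `tr(K^a_y(ρ̄))`)
is at least its current value `π^a F(ρ̄, ρ^a)`. -/
theorem stmt4 {n m sa sb : ℕ}
    (Ma : Fin m → Fin sa → Matrix (Fin n) (Fin n) ℂ)
    (Mb : Fin m → Fin sb → Matrix (Fin n) (Fin n) ℂ)
    (hMa : ∑ y, ∑ μ, (Ma y μ)ᴴ * Ma y μ = 1)
    (hMb : ∑ y, ∑ μ, (Mb y μ)ᴴ * Mb y μ = 1)
    (ρbar ρa ρb : Matrix (Fin n) (Fin n) ℂ)
    (hbar : ρbar.PosSemidef) (hbart : ρbar.trace = 1)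
    (hρa : ρa.PosSemidef) (hρat : ρa.trace = 1)
    (hρb : ρb.PosSemidef) (hρbt : ρb.trace = 1)
    (πa πb : ℝ) (hπa : 0 ≤ πa) (hπb : 0 ≤ πb) (hsum : πa + πb = 1) :
    πa * fidelity ρbar ρa ≤
      ∑ y : Fin m, (kraus (Ma y) ρbar).trace.re *
        (((kraus (Ma y) ρa).trace.re * πa /
            ((kraus (Ma y) ρa).trace.re * πa + (kraus (Mb y) ρb).trace.re * πb)) *
          fidelity (((kraus (Ma y) ρbar).trace)⁻¹ • kraus (Ma y) ρbar)
            (((kraus (Ma y) ρa).trace)⁻¹ • kraus (Ma y) ρa)) := by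
  classical
  have hXpsd : ∀ y, (kraus (Ma y) ρbar).PosSemidef := fun y => kraus_psd _ hbar
  have hYpsd : ∀ y, (kraus (Ma y) ρa).PosSemidef := fun y => kraus_psd _ hρa
  have hZpsd : ∀ y, (kraus (Mb y) ρb).PosSemidef := fun y => kraus_psd _ hρb
  -- abbreviations (as plain functions, not `set`)
  let q : Fin m → ℝ := fun y => (kraus (Ma y) ρa).trace.re
  let r : Fin m → ℝ := fun y => (kraus (Mb y) ρb).trace.re
  let g : Fin m → ℝ := fun y =>
    (matSqrt (matSqrt (kraus (Ma y) ρbar) * kraus (Ma y) ρa *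
      matSqrt (kraus (Ma y) ρbar))).trace.re
  have hq0 : ∀ y, 0 ≤ q y := fun y => psd_trace_re_nonneg (hYpsd y)
  have hr0 : ∀ y, 0 ≤ r y := fun y => psd_trace_re_nonneg (hZpsd y)
  have hg0 : ∀ y, 0 ≤ g y := fun y =>
    psd_trace_re_nonneg (matSqrt_posSemidef (inner_psd (hXpsd y) (hYpsd y)))
  have hgp : ∀ y, (kraus (Ma y) ρbar).trace.re = 0 → g y = 0 := fun y h =>
    g_zero_left (hXpsd y) h
  have hgq : ∀ y, q y = 0 → g y = 0 := fun y h => g_zero_right (hYpsd y) h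
  -- rewrite each term of the RHS
  have hterm : ∀ y : Fin m, (kraus (Ma y) ρbar).trace.re *
        (((kraus (Ma y) ρa).trace.re * πa /
            ((kraus (Ma y) ρa).trace.re * πa + (kraus (Mb y) ρb).trace.re * πb)) *
          fidelity (((kraus (Ma y) ρbar).trace)⁻¹ • kraus (Ma y) ρbar)
            (((kraus (Ma y) ρa).trace)⁻¹ • kraus (Ma y) ρa)) =
      πa * ((g y) ^ 2 / (q y * πa + r y * πb)) := by
    intro y
    rw [fidelity_scale (hXpsd y) (hYpsd y)]
    exact term_calc _ _ _ πa (g y) (hgp y) (hgq y)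
  rw [Finset.sum_congr rfl fun y _ => hterm y, ← Finset.mul_sum]
  -- reduce to the real inequality
  by_cases hπ : πa = 0
  · simp [hπ]
  have hfg : fidelity ρbar ρa =
      ((matSqrt (matSqrt ρbar * ρa * matSqrt ρbar)).trace.re) ^ 2 := rfl
  rw [hfg]
  refine mul_le_mul_of_nonneg_left ?_ hπa
  have hG0 : 0 ≤ (matSqrt (matSqrt ρbar * ρa * matSqrt ρbar)).trace.re :=
    psd_trace_re_nonneg (matSqrt_posSemidef (inner_psd hbar hρa))
  have hsumq : ∑ y, q y = 1 := by
    have h1 := kraus_trace_total Ma hMa ρa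
    rw [hρat] at h1
    have := congrArg Complex.re h1
    rwa [Complex.re_sum] at this
  have hsumr : ∑ y, r y = 1 := by
    have h1 := kraus_trace_total Mb hMb ρb
    rw [hρbt] at h1
    have := congrArg Complex.re h1
    rwa [Complex.re_sum] at this
  have hsums : ∑ y, (q y * πa + r y * πb) = 1 := by
    rw [Finset.sum_add_distrib, ← Finset.sum_mul, ← Finset.sum_mul, hsumq, hsumr]
    simpa using hsum
  have hs0 : ∀ y, 0 ≤ q y * πa + r y * πb := fun y =>
    add_nonneg (mul_nonneg (hq0 y) hπa) (mul_nonneg (hr0 y) hπb)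
  have hszero : ∀ y, q y * πa + r y * πb = 0 → g y = 0 := by
    intro y h
    have h1 : q y * πa = 0 := by
      have := mul_nonneg (hq0 y) hπa
      have := mul_nonneg (hr0 y) hπb
      linarith
    have h2 : q y = 0 := by
      rcases mul_eq_zero.mp h1 with h' | h'
      · exact h'
      · exact absurd h' hπ
    exact hgq y h2
  have h1 : (matSqrt (matSqrt ρbar * ρa * matSqrt ρbar)).trace.re ≤ ∑ y, g y :=
    root_superadd Ma hMa hbar hρa
  calc ((matSqrt (matSqrt ρbar * ρa * matSqrt ρbar)).trace.re) ^ 2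
      ≤ (∑ y, g y) ^ 2 := by
        have hsg : 0 ≤ ∑ y, g y := Finset.sum_nonneg fun y _ => hg0 y
        exact pow_le_pow_left₀ hG0 h1 2
    _ ≤ ∑ y, (g y) ^ 2 / (q y * πa + r y * πb) :=
        cs_step g (fun y => q y * πa + r y * πb) hs0 hg0 hsums hszero
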